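/- arXiv:2007.06728 — 2 statements merged into one kernel-verified Lean document; each statement's English description precedes it below -/
import Mathlib

section
/- Applying the translative map T_A to a valid configuration sequence never increases transfer length, and if the sequence moves at least one disk of size index ≤ g at some transition, the transfer length strictly decreases. -/
/-- A configuration of `t` towers of `n` disks on `p` posts: entry `α u y` is the
post occupied by the `y`-th largest disk of color `u` (columns 0-indexed,
column `y` holds the disks of size index `y`). -/
abbrev Config (t n p : ℕ) := Fin t → Fin n → Fin p

/-- Validity: no two equal-sized disks share a post (column-wise injectivity). -/
def ValidConfig {t n p : ℕ} (α : Config t n p) : Prop :=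
  ∀ y : Fin n, Function.Injective fun u => α u y

/-- EREW-adjacency: at least one disk moves, and every moved disk is topmost at
its source beforehand and at its destination afterwards. -/
def EREW {t n p : ℕ} (α β : Config t n p) : Prop :=
  α ≠ β ∧
    ∀ u j, α u j ≠ β u j →
      ∀ v : Fin t, ∀ y : Fin n, (j : ℕ) < (y : ℕ) →
        α v y ≠ α u j ∧ β v y ≠ β u j

/-- One step of a valid sequence: equal or EREW-adjacent configurations. -/
def Step {t n p : ℕ} (α β : Config t n p) : Prop := α = β ∨ EREW α β

/-- The set of disks moved between two configurations (the transfer vector: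
each moved disk determines its source and destination posts). -/
def moves {t n p : ℕ} (α β : Config t n p) : Finset (Fin t × Fin n) :=
  Finset.univ.filter fun d => α d.1 d.2 ≠ β d.1 d.2

/-- A valid sequence of configurations. -/
def ValidSeq {t n p : ℕ} (l : List (Config t n p)) : Prop :=
  (∀ α ∈ l, ValidConfig α) ∧ l.Chain' Step

/-- Transfer length of a configuration sequence: total number of disk moves. -/
def transferLength {t n p : ℕ} : List (Config t n p) → ℕ
  | [] => 0
  | [_] => 0
  | α :: β :: rest => (moves α β).card + transferLength (β :: rest)

/-- Containment in the cluster of grading `g·𝟏` determined by the placement `B`: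
the configuration agrees with `B` on all columns of index `< g`. -/
def InCluster {t n p : ℕ} (g : ℕ) (B α : Config t n p) : Prop :=
  ∀ u : Fin t, ∀ y : Fin n, (y : ℕ) < g → α u y = B u y

/-- The translative map onto the cluster of grading `g·𝟏` determined by `B`. -/
def T {t n p : ℕ} (g : ℕ) (B : Config t n p) (α : Config t n p) : Config t n p :=
  fun u y => if (y : ℕ) < g then B u y else α u y

/-- The reflective map swapping posts `q` and `r` on all columns of index `≥ g`. -/
def R {t n p : ℕ} (g : ℕ) (q r : Fin p) (α : Config t n p) : Config t n p :=
  fun u y => if g ≤ (y : ℕ) then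
    (if α u y = q then r else if α u y = r then q else α u y) else α u y


lemma moves_T_subset {t n p : ℕ} (g : ℕ) (A α β : Config t n p) :
    moves (T g A α) (T g A β) ⊆ (moves α β).filter (fun d => g ≤ (d.2 : ℕ)) := by
  intro d hd
  simp only [moves, Finset.mem_filter, Finset.mem_univ, true_and, T] at hd ⊢
  by_cases h : (d.2 : ℕ) < g
  · replace hd := (Finset.mem_filter.mp hd).2
    simp [h] at hd
  · replace hd := (Finset.mem_filter.mp hd).2
    simp only [if_neg h] at hd
    exact ⟨hd, le_of_not_gt h⟩

lemma moves_T_card_le {t n p : ℕ} (g : ℕ) (A α β : Config t n p) :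
    (moves (T g A α) (T g A β)).card ≤ (moves α β).card :=
  le_trans (Finset.card_le_card (moves_T_subset g A α β)) (Finset.card_filter_le _ _)

lemma moves_T_card_lt {t n p : ℕ} (g : ℕ) (A α β : Config t n p)
    (d : Fin t × Fin n) (hd : d ∈ moves α β) (hg : (d.2 : ℕ) < g) :
    (moves (T g A α) (T g A β)).card < (moves α β).card := by
  refine lt_of_le_of_lt (Finset.card_le_card (moves_T_subset g A α β)) ?_
  apply Finset.card_lt_card
  refine ⟨Finset.filter_subset _ _, fun hsub => ?_⟩
  have := hsub hd
  simp only [Finset.mem_filter] at this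
  omega

/-- the translative map never increases transfer length, and if
some transition of the sequence moves a disk of index `≤ g` the transfer length
strictly decreases. -/
theorem translative_transfer_length {t n p : ℕ} (g : ℕ) (A : Config t n p)
    (ν : List (Config t n p)) (hν : ValidSeq ν) :
    transferLength (ν.map (T g A)) ≤ transferLength ν ∧
    ((∃ i, ∃ hi : i + 1 < ν.length,
        ∃ d ∈ moves (ν.get ⟨i, by omega⟩) (ν.get ⟨i + 1, hi⟩), (d.2 : ℕ) < g) →
      transferLength (ν.map (T g A)) < transferLength ν) := by
  clear hν
  induction ν with
  | nil => exact ⟨le_rfl, by rintro ⟨i, hi, _⟩; simp at hi⟩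
  | cons α l ih =>
    cases l with
    | nil =>
      refine ⟨le_rfl, ?_⟩
      rintro ⟨i, hi, _⟩
      simp at hi
    | cons β rest =>
      obtain ⟨ihle, ihlt⟩ := ih
      simp only [List.map_cons, transferLength] at *
      constructor
      · exact Nat.add_le_add (moves_T_card_le g A α β) ihle
      · rintro ⟨i, hi, d, hd, hdg⟩
        cases i with
        | zero =>
          exact Nat.add_lt_add_of_lt_of_le (moves_T_card_lt g A α β d hd hdg) ihle
        | succ j =>
          have hj : j + 1 < (β :: rest).length := by
            simpa using hi
          refine Nat.add_lt_add_of_le_of_lt (moves_T_card_le g A α β) (ihlt ⟨j, hj, d, ?_, hdg⟩)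
          exact hd
end

section
/- (Conditional triangle inequality for clusters.) Fix g ∈ [n], a color v, and a cluster A₀ of grading (g−1)·𝟏. Let a, b, c be pairwise distinct posts and let A, B, C be the subclusters of A₀ in which disk (v,g) occupies a, b, c respectively. Let α be a configuration in A that is fixed by the reflective map R^g_{b,c}, and let β be a configuration in B. Then for every valid sequence ν from α to β that decomposes as ν = ν_A + ν_C + ν_B with the parts contained in A, C, B respectively (in that order), there exists a valid sequence μ from α to β decomposing as μ = μ_A + μ_B with parts contained in A and B, such that the transfer length of μ is strictly less than that of ν. -/
section Helpers
variable {t n p : ℕ}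

lemma R_swap (g : ℕ) (q r : Fin p) (α : Config t n p) (u : Fin t) (y : Fin n) :
    R g q r α u y = if g ≤ (y : ℕ) then Equiv.swap q r (α u y) else α u y := by
  simp [R, Equiv.swap_apply_def]

lemma R_low {g : ℕ} (q r : Fin p) (α : Config t n p) (u : Fin t) {y : Fin n}
    (h : (y : ℕ) < g) : R g q r α u y = α u y := by
  simp [R, Nat.not_le.mpr h]

lemma R_high {g : ℕ} (q r : Fin p) (α : Config t n p) (u : Fin t) {y : Fin n}
    (h : g ≤ (y : ℕ)) : R g q r α u y = Equiv.swap q r (α u y) := by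
  simp [R_swap, h]

lemma R_valid {g : ℕ} {q r : Fin p} {α : Config t n p} (h : ValidConfig α) :
    ValidConfig (R g q r α) := by
  intro y u1 u2 hu
  simp only [R_swap] at hu
  split_ifs at hu with hg
  · exact h y ((Equiv.swap q r).injective hu)
  · exact h y hu

lemma R_incluster {g : ℕ} {q r : Fin p} {A₀ α : Config t n p} (h : InCluster g A₀ α) :
    InCluster g A₀ (R g q r α) := by
  intro u y hy; rw [R_low _ _ _ _ hy]; exact h u y hy

lemma step_R {g : ℕ} {q r : Fin p} {A₀ γ δ : Config t n p}
    (hγc : InCluster g A₀ γ) (hδc : InCluster g A₀ δ) (h : Step γ δ) :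
    Step (R g q r γ) (R g q r δ) := by
  rcases h with h | ⟨hne, hE⟩
  · exact Or.inl (by rw [h])
  · right
    constructor
    · intro heq
      apply hne
      funext u y
      have := congrFun (congrFun heq u) y
      simp only [R_swap] at this
      split_ifs at this with hg
      · exact (Equiv.swap q r).injective this
      · exact this
    · intro u j hj w y hlt
      have hg : g ≤ (j : ℕ) := by
        by_contra hgl
        push_neg at hgl
        rw [R_low _ _ _ _ hgl, R_low _ _ _ _ hgl, hγc u j hgl, hδc u j hgl] at hj
        exact hj rfl
      have hgy : g ≤ (y : ℕ) := le_of_lt (lt_of_le_of_lt hg hlt)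
      rw [R_high _ _ _ _ hg, R_high _ _ _ _ hg] at hj
      have hj' : γ u j ≠ δ u j := fun h => hj (by rw [h])
      have h1 := hE u j hj' w y hlt
      rw [R_high _ _ _ _ hgy, R_high _ _ _ _ hg, R_high _ _ _ _ hgy, R_high _ _ _ _ hg]
      exact ⟨fun h => h1.1 ((Equiv.swap q r).injective h),
             fun h => h1.2 ((Equiv.swap q r).injective h)⟩

lemma moves_R (g : ℕ) (q r : Fin p) (γ δ : Config t n p) :
    moves (R g q r γ) (R g q r δ) = moves γ δ := by
  ext x
  simp only [moves, Finset.mem_filter, Finset.mem_univ, true_and, R_swap]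
  split_ifs with hg
  · exact not_congr ⟨fun h => (Equiv.swap q r).injective h,
      fun h => by rw [h]⟩
  · exact Iff.rfl

lemma tl_append_cons : ∀ (l₁ : List (Config t n p)) (x : Config t n p) (l₂ : List (Config t n p)),
    transferLength (l₁ ++ x :: l₂) = transferLength (l₁ ++ [x]) + transferLength (x :: l₂)
  | [], x, l₂ => by simp [transferLength]
  | [a], x, l₂ => by simp [transferLength]
  | a :: b :: l₁, x, l₂ => by
    simp only [List.cons_append, transferLength, List.append_eq]
    have := tl_append_cons (b :: l₁) x l₂
    simp only [List.cons_append] at this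
    omega

lemma tl_concat : ∀ (l : List (Config t n p)) (hne : l ≠ []) (x : Config t n p),
    transferLength (l ++ [x]) = transferLength l + (moves (l.getLast hne) x).card
  | [], hne, _ => absurd rfl hne
  | [a], _, x => by simp [transferLength]
  | a :: b :: l, hx, x => by
    simp only [List.cons_append, transferLength, List.append_eq]
    have := tl_concat (b :: l) (List.cons_ne_nil _ _) x
    simp only [List.cons_append] at this
    have hg : (a :: b :: l).getLast hx = (b :: l).getLast (List.cons_ne_nil _ _) :=
      List.getLast_cons _
    rw [hg]
    omega

lemma tl_map (f : Config t n p → Config t n p)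
    (hf : ∀ γ δ, (moves (f γ) (f δ)).card = (moves γ δ).card) :
    ∀ l : List (Config t n p), transferLength (l.map f) = transferLength l
  | [] => rfl
  | [a] => rfl
  | a :: b :: l => by
    simp only [List.map_cons, transferLength]
    have := tl_map f hf (b :: l)
    simp only [List.map_cons] at this
    have := hf a b
    omega

lemma chain'_map_of_mem {S : Config t n p → Config t n p → Prop} (f : Config t n p → Config t n p) :
    ∀ l : List (Config t n p), l.Chain' S →
      (∀ a ∈ l, ∀ b ∈ l, S a b → S (f a) (f b)) → (l.map f).Chain' S
  | [], _, _ => List.isChain_nil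
  | [a], _, _ => List.isChain_singleton _
  | a :: b :: l, hc, hm => by
    unfold List.Chain' at *
    rw [List.isChain_cons_cons] at hc
    simp only [List.map_cons, List.isChain_cons_cons] at *
    refine ⟨hm a (by simp) b (by simp) hc.1, ?_⟩
    have := chain'_map_of_mem f (b :: l) hc.2
      (fun x hx y hy => hm x (List.mem_cons_of_mem a hx) y (List.mem_cons_of_mem a hy))
    simpa [List.Chain'] using this

end Helpers

section Junction
variable {t n p : ℕ} {v : Fin t} {d : Fin n} {A₀ : Config t n p} {b c : Fin p}
  {γ δ : Config t n p}

lemma junction_diff (hbc : b ≠ c)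
    (hγv : ValidConfig γ) (hδv : ValidConfig δ)
    (hγc : InCluster (d : ℕ) A₀ γ) (hδc : InCluster (d : ℕ) A₀ δ)
    (hγ : γ v d = c) (hδ : δ v d = b) (hstep : Step γ δ) :
    ∀ u j, R (d : ℕ) b c γ u j ≠ δ u j → γ u j ≠ δ u j ∧ (d : ℕ) ≤ (j : ℕ) := by
  intro u j hne
  have hle : (d : ℕ) ≤ (j : ℕ) := by
    by_contra h
    push_neg at h
    rw [R_low _ _ _ _ h, hγc u j h, hδc u j h] at hne
    exact hne rfl
  refine ⟨?_, hle⟩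
  have hmv : γ v d ≠ δ v d := by rw [hγ, hδ]; exact hbc.symm
  have hneq : γ ≠ δ := fun h => hmv (by rw [h])
  have E : EREW γ δ := hstep.resolve_left hneq
  intro heq
  rw [R_high _ _ _ _ hle, heq] at hne
  by_cases hjd : j = d
  · subst hjd
    by_cases hb : δ u j = b
    · have huv : u = v := hδv j (show δ u j = δ v j by rw [hb, hδ])
      subst huv
      exact hbc (((hγ.symm.trans heq).trans hb).symm)
    · by_cases hc' : δ u j = c
      · have huv : u = v := hγv j (show γ u j = γ v j by rw [heq, hc', hγ])
        subst huv
        exact hbc (hδ.symm.trans hc')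
      · exact hne (Equiv.swap_apply_of_ne_of_ne hb hc')
  · have hlt : (d : ℕ) < (j : ℕ) := lt_of_le_of_ne hle (fun h => hjd (Fin.ext h.symm))
    have h1 := E.2 v d hmv u j hlt
    rw [hγ, hδ] at h1
    by_cases hb : δ u j = b
    · exact h1.2 hb
    · by_cases hc' : δ u j = c
      · exact h1.1 (heq.trans hc')
      · exact hne (Equiv.swap_apply_of_ne_of_ne hb hc')

lemma junction_step (hbc : b ≠ c)
    (hγv : ValidConfig γ) (hδv : ValidConfig δ)
    (hγc : InCluster (d : ℕ) A₀ γ) (hδc : InCluster (d : ℕ) A₀ δ)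
    (hγ : γ v d = c) (hδ : δ v d = b) (hstep : Step γ δ) :
    Step (R (d : ℕ) b c γ) δ := by
  by_cases h : R (d : ℕ) b c γ = δ
  · exact Or.inl h
  · right
    refine ⟨h, fun u j hne w y hlt => ?_⟩
    obtain ⟨hmv, hle⟩ := junction_diff hbc hγv hδv hγc hδc hγ hδ hstep u j hne
    have hmv0 : γ v d ≠ δ v d := by rw [hγ, hδ]; exact hbc.symm
    have E : EREW γ δ := hstep.resolve_left (fun h => hmv0 (by rw [h]))
    have h1 := E.2 u j hmv w y hlt
    have hley : (d : ℕ) ≤ (y : ℕ) := le_of_lt (lt_of_le_of_lt hle hlt)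
    rw [R_high _ _ _ _ hle, R_high _ _ _ _ hley]
    exact ⟨fun hh => h1.1 ((Equiv.swap b c).injective hh), h1.2⟩

lemma junction_moves (hbc : b ≠ c)
    (hγv : ValidConfig γ) (hδv : ValidConfig δ)
    (hγc : InCluster (d : ℕ) A₀ γ) (hδc : InCluster (d : ℕ) A₀ δ)
    (hγ : γ v d = c) (hδ : δ v d = b) (hstep : Step γ δ) :
    (moves (R (d : ℕ) b c γ) δ).card < (moves γ δ).card := by
  apply Finset.card_lt_card
  rw [Finset.ssubset_iff_of_subset]
  · refine ⟨(v, d), ?_, ?_⟩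
    · simp only [moves, Finset.mem_filter, Finset.mem_univ, true_and]
      rw [hγ, hδ]; exact hbc.symm
    · simp only [moves, Finset.mem_filter, Finset.mem_univ, true_and, not_not]
      rw [R_high _ _ _ _ (le_refl _), hγ, Equiv.swap_apply_right, hδ]
  · intro x hx
    simp only [moves, Finset.mem_filter, Finset.mem_univ, true_and] at hx ⊢
    exact (junction_diff hbc hγv hδv hγc hδc hγ hδ hstep x.1 x.2 hx).1

end Junction



/-- conditional triangle inequality for clusters: a valid
sequence from `α ∈ A` (with `α` fixed by the reflection `R^g_{b,c}`) to
`β ∈ B` that decomposes as parts contained in the subclusters `A`, `C`, `B` of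
`A₀` (where disk `(v,g)` occupies posts `a`, `c`, `b` respectively) can be
replaced by a strictly shorter valid sequence decomposing into parts contained
in `A` and `B` only. -/
theorem conditional_triangle_inequality {t n p : ℕ} (v : Fin t) (d : Fin n)
    (A₀ : Config t n p) (a b c : Fin p)
    (hab : a ≠ b) (hac : a ≠ c) (hbc : b ≠ c)
    (α β : Config t n p) (hαfix : R (d : ℕ) b c α = α)
    (νA νC νB : List (Config t n p))
    (hAne : νA ≠ []) (hCne : νC ≠ []) (hBne : νB ≠ [])
    (hν : ValidSeq (νA ++ νC ++ νB))
    (hhead : (νA ++ νC ++ νB).head? = some α)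
    (hlast : (νA ++ νC ++ νB).getLast? = some β)
    (hA : ∀ γ ∈ νA, InCluster (d : ℕ) A₀ γ ∧ γ v d = a)
    (hC : ∀ γ ∈ νC, InCluster (d : ℕ) A₀ γ ∧ γ v d = c)
    (hB : ∀ γ ∈ νB, InCluster (d : ℕ) A₀ γ ∧ γ v d = b) :
    ∃ μA μB : List (Config t n p),
      ValidSeq (μA ++ μB) ∧
      (μA ++ μB).head? = some α ∧
      (μA ++ μB).getLast? = some β ∧
      (∀ γ ∈ μA, InCluster (d : ℕ) A₀ γ ∧ γ v d = a) ∧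
      (∀ γ ∈ μB, InCluster (d : ℕ) A₀ γ ∧ γ v d = b) ∧
      transferLength (μA ++ μB) < transferLength (νA ++ νC ++ νB) := by
  obtain ⟨δ0, νB', rfl⟩ := List.exists_cons_of_ne_nil hBne
  set Rf : Config t n p → Config t n p := R (d : ℕ) b c with hRfdef
  set γ0 : Config t n p := νC.getLast hCne with hγ0def
  have hγ0mem : γ0 ∈ νC := List.getLast_mem hCne
  have hδ0mem : δ0 ∈ δ0 :: νB' := List.mem_cons_self
  obtain ⟨hvalid, hchain⟩ := hν
  unfold List.Chain' at hchain
  rw [List.isChain_append] at hchain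
  obtain ⟨hchain1, hchain2, hjunc⟩ := hchain
  have hlast1 : (νA ++ νC).getLast? = some γ0 := by
    rw [List.getLast?_append, List.getLast?_eq_getLast hCne]
    rfl
  have hstep0 : Step γ0 δ0 := hjunc γ0 hlast1 δ0 rfl
  have hγ0v : ValidConfig γ0 :=
    hvalid γ0 (List.mem_append_left _ (List.mem_append_right _ hγ0mem))
  have hδ0v : ValidConfig δ0 := hvalid δ0 (List.mem_append_right _ hδ0mem)
  obtain ⟨hγ0cl, hγ0c⟩ := hC γ0 hγ0mem
  obtain ⟨hδ0cl, hδ0b⟩ := hB δ0 hδ0mem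
  -- the cluster condition for elements of νA ++ νC
  have hclAC : ∀ x ∈ νA ++ νC, InCluster (d : ℕ) A₀ x := fun x hx =>
    (List.mem_append.1 hx).elim (fun h => (hA x h).1) (fun h => (hC x h).1)
  -- properties of Rf
  have hmovescard : ∀ γ δ : Config t n p, (moves (Rf γ) (Rf δ)).card = (moves γ δ).card :=
    fun γ δ => by rw [hRfdef, moves_R]
  -- the new sequence
  have heq : νA.map Rf ++ (νC.map Rf ++ (δ0 :: νB')) =
      (νA ++ νC).map Rf ++ (δ0 :: νB') := by rw [List.map_append, List.append_assoc]
  refine ⟨νA.map Rf, νC.map Rf ++ (δ0 :: νB'), ?_, ?_, ?_, ?_, ?_, ?_⟩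
  · rw [heq]
    constructor
    · intro x hx
      rcases List.mem_append.1 hx with hx | hx
      · obtain ⟨y, hy, rfl⟩ := List.mem_map.1 hx
        exact R_valid (hvalid y (List.mem_append_left _ hy))
      · exact hvalid x (List.mem_append_right _ hx)
    · unfold List.Chain'
      rw [List.isChain_append]
      refine ⟨?_, hchain2, ?_⟩
      · exact chain'_map_of_mem Rf (νA ++ νC) hchain1
          (fun x hx y hy hs => step_R (hclAC x hx) (hclAC y hy) hs)
      · intro x hx y hy
        rw [List.getLast?_map, hlast1] at hx
        simp only [Option.map_some, Option.mem_def, Option.some_inj] at hx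
        simp only [List.head?_cons, Option.mem_def, Option.some_inj] at hy
        subst hx; subst hy
        exact junction_step hbc hγ0v hδ0v hγ0cl hδ0cl hγ0c hδ0b hstep0
  · -- head
    rw [heq]
    obtain ⟨a0, νA', rfl⟩ := List.exists_cons_of_ne_nil hAne
    simp only [List.cons_append, List.head?_cons, Option.some_inj] at hhead ⊢
    rw [List.map_cons]
    simp only [List.cons_append, List.head?_cons, Option.some_inj]
    rw [hhead]
    exact hαfix
  · -- last
    rw [heq]
    rw [List.getLast?_append] at hlast ⊢
    rw [List.getLast?_eq_getLast (l := δ0 :: νB') (List.cons_ne_nil _ _)] at hlast ⊢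
    exact hlast
  · intro x hx
    obtain ⟨y, hy, rfl⟩ := List.mem_map.1 hx
    obtain ⟨hycl, hya⟩ := hA y hy
    refine ⟨R_incluster hycl, ?_⟩
    rw [hRfdef, R_high _ _ _ _ (le_refl _), hya, Equiv.swap_apply_of_ne_of_ne hab hac]
  · intro x hx
    rcases List.mem_append.1 hx with hx | hx
    · obtain ⟨y, hy, rfl⟩ := List.mem_map.1 hx
      obtain ⟨hycl, hyc⟩ := hC y hy
      refine ⟨R_incluster hycl, ?_⟩
      rw [hRfdef, R_high _ _ _ _ (le_refl _), hyc, Equiv.swap_apply_right]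
    · exact hB x hx
  · -- transfer length
    have hACne : νA ++ νC ≠ [] := fun h => hAne (List.append_eq_nil_iff.1 h).1
    have hmapne : (νA ++ νC).map Rf ≠ [] := fun h => hACne (List.map_eq_nil_iff.1 h)
    rw [heq, tl_append_cons ((νA ++ νC).map Rf) δ0 νB',
        tl_append_cons (νA ++ νC) δ0 νB',
        tl_concat ((νA ++ νC).map Rf) hmapne δ0,
        tl_concat (νA ++ νC) hACne δ0,
        tl_map Rf hmovescard]
    have hgl : ((νA ++ νC).map Rf).getLast hmapne = Rf γ0 := by
      rw [List.getLast_map]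
      rw [hγ0def]
      rw [List.getLast_append_of_ne_nil (h₂ := hCne)]
    rw [hgl]
    have hglAC : (νA ++ νC).getLast hACne = γ0 := by
      rw [hγ0def, List.getLast_append_of_ne_nil (h₂ := hCne)]
    rw [hglAC]
    have hlt := junction_moves hbc hγ0v hδ0v hγ0cl hδ0cl hγ0c hδ0b hstep0
    rw [hRfdef]
    omega
end
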